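/- Let u : ℝ → ℝ be twice continuously differentiable with u' > 0 and u'' < 0, let ħ : [0,1] → ℝ be nonnegative, λ > 0, φ : [0,1] → ℝ, and β ∈ ℝ with u'(β) in the range of u'. Suppose δ ∈ C²[0,1] is concave with δ'(1) = u'(β), δ' takes values in the range of u', and min{ δ''(p) − ħ(p)·u''((u')⁻¹(δ'(p))), λφ(p) − δ(p) } = 0 a.e. on [0,1]. Then Q̄(p) := (u')⁻¹(δ'(p)) is absolutely continuous on [0,1], satisfies Q̄(1) = β, Q̄'(p) ≥ 0 a.e., and Q̄'(p) ≤ ħ(p) a.e.; that is, Q̄ is a feasible element of 𝒬. -/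

import Mathlib

open MeasureTheory Set

/-- A function `Q` is absolutely continuous on `[0,1]` with a.e. derivative `Q'`,
encoded via the fundamental theorem of calculus representation. -/
def AbsContOn01 (Q Q' : ℝ → ℝ) : Prop :=
  MeasureTheory.IntegrableOn Q' (Set.Icc 0 1) ∧
    ∀ p ∈ Set.Icc (0 : ℝ) 1, Q p = Q 0 + ∫ t in (0 : ℝ)..p, Q' t

/-- **Feasibility**: if `δ ∈ C²[0,1]` is concave, solves the free boundary problem
a.e. and satisfies `δ'(1) = u'(β)`, then `Q̄ := (u')⁻¹ ∘ δ'` is absolutely continuous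
on `[0,1]` with `Q̄(1) = β` and `0 ≤ Q̄' ≤ hbar` a.e., i.e. `Q̄` is feasible for `𝒬`. -/
theorem fbp_solution_feasible
    (u : ℝ → ℝ) (hu : ContDiff ℝ 2 u)
    (hu' : ∀ x, 0 < deriv u x) (hu'' : ∀ x, deriv (deriv u) x < 0)
    (hbar : ℝ → ℝ) (hbar0 : ∀ p ∈ Set.Icc (0 : ℝ) 1, 0 ≤ hbar p)
    (lam β : ℝ) (hlam : 0 < lam)
    (φ : ℝ → ℝ)
    (hβ : deriv u β ∈ Set.range (deriv u))
    (δ : ℝ → ℝ) (hδC2 : ContDiffOn ℝ 2 δ (Set.Icc 0 1))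
    (hδconc : ConcaveOn ℝ (Set.Icc 0 1) δ)
    (hδ'1 : derivWithin δ (Set.Icc 0 1) 1 = deriv u β)
    (hrange : ∀ p ∈ Set.Icc (0 : ℝ) 1,
      derivWithin δ (Set.Icc 0 1) p ∈ Set.range (deriv u))
    (hFBP : ∀ᵐ p ∂(MeasureTheory.volume.restrict (Set.Icc (0 : ℝ) 1)),
      min (derivWithin (derivWithin δ (Set.Icc 0 1)) (Set.Icc 0 1) p -
            hbar p * deriv (deriv u)
              (Function.invFun (deriv u) (derivWithin δ (Set.Icc 0 1) p)))
          (lam * φ p - δ p) = 0) :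
    ∃ Qb' : ℝ → ℝ,
      AbsContOn01 (fun p => Function.invFun (deriv u) (derivWithin δ (Set.Icc 0 1) p)) Qb' ∧
      Function.invFun (deriv u) (derivWithin δ (Set.Icc 0 1) 1) = β ∧
      (∀ᵐ p ∂(MeasureTheory.volume.restrict (Set.Icc (0 : ℝ) 1)),
        0 ≤ Qb' p ∧ Qb' p ≤ hbar p) := by
  classical
  have hu2 : ContDiff ℝ ((1 : WithTop ℕ∞) + 1) u := by
    have : ((1 : WithTop ℕ∞) + 1) = 2 := by norm_num
    rw [this]; exact hu
  have hf1 : ContDiff ℝ 1 (deriv u) := (contDiff_succ_iff_deriv.mp hu2).2.2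
  have hfdiff : Differentiable ℝ (deriv u) := (contDiff_one_iff_deriv.mp hf1).1
  have hfcont : Continuous (deriv u) := hfdiff.continuous
  have hf'cont : Continuous (deriv (deriv u)) := (contDiff_one_iff_deriv.mp hf1).2
  have hanti : StrictAnti (deriv u) := strictAnti_of_deriv_neg hu''
  have hinj : Function.Injective (deriv u) := hanti.injective
  have hgf : ∀ x, Function.invFun (deriv u) (deriv u x) = x :=
    fun x => Function.leftInverse_invFun hinj x
  have hfg : ∀ y ∈ Set.range (deriv u), deriv u (Function.invFun (deriv u) y) = y :=
    fun y hy => Function.invFun_eq hy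
  -- the range of `deriv u` is open
  have hopen : IsOpen (Set.range (deriv u)) := by
    rw [isOpen_iff_mem_nhds]
    rintro y ⟨x, rfl⟩
    have hsub : Set.Icc (deriv u (x + 1)) (deriv u (x - 1)) ⊆ Set.range (deriv u) := by
      intro z hz
      obtain ⟨w, _, hw⟩ :=
        intermediate_value_Icc' (by linarith : x - 1 ≤ x + 1) hfcont.continuousOn hz
      exact ⟨w, hw⟩
    refine Filter.mem_of_superset (Ioo_mem_nhds ?_ ?_) (Set.Ioo_subset_Icc_self.trans hsub)
    · exact hanti (by linarith)
    · exact hanti (by linarith)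
  -- continuity of the inverse on the range
  have hgc : ∀ y ∈ Set.range (deriv u), ContinuousAt (Function.invFun (deriv u)) y := by
    rintro y ⟨x, rfl⟩
    have ht : Filter.Tendsto (Function.invFun (deriv u)) (nhds (deriv u x)) (nhds x) := by
      rw [tendsto_order]
      constructor
      · intro a ha
        filter_upwards [hopen.eventually_mem ⟨x, rfl⟩, Iio_mem_nhds (hanti ha)] with z hz1 hz2
        obtain ⟨w, rfl⟩ := hz1
        rw [hgf]
        exact hanti.lt_iff_gt.mp hz2
      · intro b hb
        filter_upwards [hopen.eventually_mem ⟨x, rfl⟩, Ioi_mem_nhds (hanti hb)] with z hz1 hz2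
        obtain ⟨w, rfl⟩ := hz1
        rw [hgf]
        exact hanti.lt_iff_gt.mp hz2
    rw [ContinuousAt, hgf]
    exact ht
  -- derivative of the inverse on the range
  have hgderiv : ∀ y ∈ Set.range (deriv u),
      HasDerivAt (Function.invFun (deriv u))
        ((deriv (deriv u) (Function.invFun (deriv u) y))⁻¹) y := by
    intro y hy
    have h1 : HasDerivAt (deriv u) (deriv (deriv u) (Function.invFun (deriv u) y))
        (Function.invFun (deriv u) y) := (hfdiff _).hasDerivAt
    refine h1.of_local_left_inverse (hgc y hy) (ne_of_lt (hu'' _)) ?_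
    filter_upwards [hopen.eventually_mem hy] with z hz
    exact hfg z hz
  -- basic facts about δ'
  have hUD : UniqueDiffOn ℝ (Set.Icc (0 : ℝ) 1) := uniqueDiffOn_Icc (by norm_num)
  have hδ'C1 : ContDiffOn ℝ 1 (derivWithin δ (Set.Icc 0 1)) (Set.Icc 0 1) :=
    hδC2.derivWithin hUD (by norm_num)
  have hδ'cont : ContinuousOn (derivWithin δ (Set.Icc 0 1)) (Set.Icc 0 1) := hδ'C1.continuousOn
  have hδ'diff : DifferentiableOn ℝ (derivWithin δ (Set.Icc 0 1)) (Set.Icc 0 1) :=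
    hδ'C1.differentiableOn one_ne_zero
  have hδ''cont :
      ContinuousOn (derivWithin (derivWithin δ (Set.Icc 0 1)) (Set.Icc 0 1)) (Set.Icc 0 1) :=
    hδ'C1.continuousOn_derivWithin hUD (le_refl 1)
  have hδ'hd : ∀ p ∈ Set.Icc (0 : ℝ) 1, HasDerivWithinAt (derivWithin δ (Set.Icc 0 1))
      (derivWithin (derivWithin δ (Set.Icc 0 1)) (Set.Icc 0 1) p) (Set.Icc 0 1) p :=
    fun p hp => (hδ'diff p hp).hasDerivWithinAt
  -- Q̄ and its derivative candidate
  have hQcont : ContinuousOn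
      (fun p => Function.invFun (deriv u) (derivWithin δ (Set.Icc 0 1) p)) (Set.Icc 0 1) :=
    fun p hp => (hgc _ (hrange p hp)).comp_continuousWithinAt (hδ'cont p hp)
  refine ⟨fun p => (deriv (deriv u) (Function.invFun (deriv u) (derivWithin δ (Set.Icc 0 1) p)))⁻¹ *
      derivWithin (derivWithin δ (Set.Icc 0 1)) (Set.Icc 0 1) p, ⟨?_, ?_⟩, ?_, ?_⟩
  · -- integrability
    exact ((hf'cont.comp_continuousOn hQcont).inv₀
      (fun p hp => ne_of_lt (hu'' _))).mul hδ''cont |>.integrableOn_Icc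
  · -- FTC representation
    intro p hp
    have hQhd : ∀ q ∈ Set.Icc (0 : ℝ) 1, HasDerivWithinAt
        (fun r => Function.invFun (deriv u) (derivWithin δ (Set.Icc 0 1) r))
        ((deriv (deriv u) (Function.invFun (deriv u) (derivWithin δ (Set.Icc 0 1) q)))⁻¹ *
          derivWithin (derivWithin δ (Set.Icc 0 1)) (Set.Icc 0 1) q) (Set.Icc 0 1) q :=
      fun q hq => (hgderiv _ (hrange q hq)).comp_hasDerivWithinAt q (hδ'hd q hq)
    have hFTC : ∫ t in (0 : ℝ)..p,
        (deriv (deriv u) (Function.invFun (deriv u) (derivWithin δ (Set.Icc 0 1) t)))⁻¹ *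
          derivWithin (derivWithin δ (Set.Icc 0 1)) (Set.Icc 0 1) t =
        Function.invFun (deriv u) (derivWithin δ (Set.Icc 0 1) p) -
          Function.invFun (deriv u) (derivWithin δ (Set.Icc 0 1) 0) := by
      refine intervalIntegral.integral_eq_sub_of_hasDeriv_right_of_le hp.1
        (hQcont.mono (Set.Icc_subset_Icc le_rfl hp.2)) ?_ ?_
      · intro x hx
        have hx1 : x < 1 := lt_of_lt_of_le hx.2 hp.2
        have hx' : x ∈ Set.Icc (0 : ℝ) 1 := ⟨le_of_lt hx.1, le_of_lt hx1⟩
        exact (((hQhd x hx').hasDerivAt (Icc_mem_nhds hx.1 hx1)).hasDerivWithinAt)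
      · exact ((((hf'cont.comp_continuousOn hQcont).inv₀
          (fun q hq => ne_of_lt (hu'' _))).mul hδ''cont).mono
          (Set.Icc_subset_Icc le_rfl hp.2)).intervalIntegrable_of_Icc hp.1
    rw [hFTC]; ring
  · -- boundary value
    rw [hδ'1]; exact hgf β
  · -- a.e. bounds
    have hnull : (volume.restrict (Set.Icc (0 : ℝ) 1)) ({0, 1} : Set ℝ) = 0 := by
      refine le_antisymm (le_trans (Measure.restrict_apply_le _ _) ?_) zero_le
      have : (volume : Measure ℝ) ({0, 1} : Set ℝ) = 0 :=
        ((Set.countable_singleton (1 : ℝ)).insert 0).measure_zero volume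
      rw [this]
    have haeIoo : ∀ᵐ p ∂(volume.restrict (Set.Icc (0 : ℝ) 1)), p ∈ Set.Ioo (0 : ℝ) 1 := by
      have h1 : ∀ᵐ p ∂(volume.restrict (Set.Icc (0 : ℝ) 1)), p ∈ Set.Icc (0 : ℝ) 1 :=
        ae_restrict_mem measurableSet_Icc
      have h2 : ∀ᵐ p ∂(volume.restrict (Set.Icc (0 : ℝ) 1)), p ∉ ({0, 1} : Set ℝ) :=
        measure_eq_zero_iff_ae_notMem.mp hnull
      filter_upwards [h1, h2] with p hp hp2
      simp only [Set.mem_insert_iff, Set.mem_singleton_iff, not_or] at hp2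
      exact ⟨lt_of_le_of_ne hp.1 (Ne.symm hp2.1), lt_of_le_of_ne hp.2 hp2.2⟩
    have hδ'anti : AntitoneOn (derivWithin δ (Set.Icc 0 1)) (Set.Icc 0 1) :=
      hδconc.antitoneOn_derivWithin (hδC2.differentiableOn (by norm_num))
    have hδ''nonpos : ∀ p ∈ Set.Ioo (0 : ℝ) 1,
        derivWithin (derivWithin δ (Set.Icc 0 1)) (Set.Icc 0 1) p ≤ 0 := by
      intro p hp
      have hd : HasDerivAt (derivWithin δ (Set.Icc 0 1))
          (derivWithin (derivWithin δ (Set.Icc 0 1)) (Set.Icc 0 1) p) p :=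
        (hδ'hd p (Set.Ioo_subset_Icc_self hp)).hasDerivAt (Icc_mem_nhds hp.1 hp.2)
      have ht : Filter.Tendsto (slope (derivWithin δ (Set.Icc 0 1)) p)
          (nhdsWithin p (Set.Ioi p))
          (nhds (derivWithin (derivWithin δ (Set.Icc 0 1)) (Set.Icc 0 1) p)) :=
        (hasDerivAt_iff_tendsto_slope.1 hd).mono_left
          (nhdsWithin_mono _ (fun x hx => ne_of_gt hx))
      refine le_of_tendsto ht ?_
      filter_upwards [Ioo_mem_nhdsGT_of_mem (⟨le_rfl, hp.2⟩ : p ∈ Set.Ico p 1)] with q hq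
      rw [slope_def_field]
      have h1 : derivWithin δ (Set.Icc 0 1) q ≤ derivWithin δ (Set.Icc 0 1) p :=
        hδ'anti (Set.Ioo_subset_Icc_self hp)
          ⟨le_of_lt (lt_trans hp.1 hq.1), le_of_lt hq.2⟩ (le_of_lt hq.1)
      have h2 : (0 : ℝ) < q - p := by linarith [hq.1]
      exact div_nonpos_of_nonpos_of_nonneg (by linarith) (le_of_lt h2)
    filter_upwards [hFBP, haeIoo] with p hmin hpIoo
    have hcneg : deriv (deriv u) (Function.invFun (deriv u) (derivWithin δ (Set.Icc 0 1) p)) < 0 :=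
      hu'' _
    have hA : 0 ≤ derivWithin (derivWithin δ (Set.Icc 0 1)) (Set.Icc 0 1) p -
        hbar p * deriv (deriv u) (Function.invFun (deriv u) (derivWithin δ (Set.Icc 0 1) p)) := by
      have h := min_le_left (derivWithin (derivWithin δ (Set.Icc 0 1)) (Set.Icc 0 1) p -
        hbar p * deriv (deriv u) (Function.invFun (deriv u) (derivWithin δ (Set.Icc 0 1) p)))
        (lam * φ p - δ p)
      rw [hmin] at h
      exact h
    have hd'' := hδ''nonpos p hpIoo
    constructor
    · nlinarith [inv_nonpos.2 (le_of_lt hcneg), hd'']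
    · rw [inv_mul_eq_div]
      exact (div_le_iff_of_neg hcneg).2 (by linarith)
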